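/- If x1, x2 ∈ X satisfy x1 ⪰ x2, then for every x3 ∈ X one has x1 ⊛ x3 ⪰ x2 ⊛ x3 and x1 ⊠ x3 ⪰ x2 ⊠ x3. -/

import Mathlib

open MeasureTheory Real Filter Topology Polynomial

noncomputable section

/-- The space of finite signed Borel measures on the extended reals `ℝ̄`. -/
abbrev SM := MeasureTheory.SignedMeasure EReal

namespace SCLDPC

/-- The weight `e^{-α/2}` as an extended nonnegative real (`+∞` at `α = -∞`). -/
def wt (α : EReal) : ENNReal :=
  if α = ⊥ then ⊤ else if α = ⊤ then 0 else ENNReal.ofReal (Real.exp (-(α.toReal) / 2))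

/-- A (nonnegative) Borel measure `μ` on `ℝ̄` is symmetric if
`∫_{-E} e^{-α/2} μ(dα) = ∫_{E} e^{-α/2} μ(dα)` for every Borel set `E`
(stated with extended nonnegative integrals, which is equivalent to requiring
equality whenever one of the two sides is finite). -/
def IsSymmMeasure (μ : Measure EReal) : Prop :=
  ∀ E : Set EReal, MeasurableSet E →
    ∫⁻ α in (fun a : EReal => -a) ⁻¹' E, wt α ∂μ = ∫⁻ α in E, wt α ∂μ

/-- Positive part of the Jordan decomposition. -/
def jp (x : SM) : Measure EReal := x.toJordanDecomposition.posPart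

/-- Negative part of the Jordan decomposition. -/
def jn (x : SM) : Measure EReal := x.toJordanDecomposition.negPart

instance (x : SM) : IsFiniteMeasure (jp x) := x.toJordanDecomposition.posPart_finite

instance (x : SM) : IsFiniteMeasure (jn x) := x.toJordanDecomposition.negPart_finite

/-- A finite signed Borel measure on `ℝ̄` is symmetric iff both parts of its Jordan
decomposition are symmetric measures. -/
def IsSymm (x : SM) : Prop := IsSymmMeasure (jp x) ∧ IsSymmMeasure (jn x)

/-- Membership in `X`, the set of symmetric probability measures on `ℝ̄`. -/
def MemX (x : SM) : Prop :=
  (∃ (μ : Measure EReal) (hμ : IsProbabilityMeasure μ),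
      x = (letI := hμ; μ.toSignedMeasure)) ∧ IsSymm x

/-- Membership in `X_d`, the set of differences of symmetric probability measures. -/
def MemXd (y : SM) : Prop := ∃ x1 x2 : SM, MemX x1 ∧ MemX x2 ∧ y = x1 - x2

/-- Integral of a real function against a finite signed measure. -/
def sInt (f : EReal → ℝ) (x : SM) : ℝ := (∫ α, f α ∂(jp x)) - ∫ α, f α ∂(jn x)

/-- `tanh(α/2)` extended continuously to `ℝ̄`. -/
def tanhHalf (α : EReal) : ℝ :=
  if α = ⊤ then 1 else if α = ⊥ then -1 else Real.tanh (α.toReal / 2)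

/-- The inverse hyperbolic tangent on `(-1, 1)`. -/
def artanh (t : ℝ) : ℝ := Real.log ((1 + t) / (1 - t)) / 2

/-- `2 tanh⁻¹(t)` valued in `ℝ̄` (sending `t ≥ 1` to `+∞` and `t ≤ -1` to `-∞`). -/
def atanhTwo (t : ℝ) : EReal :=
  if 1 ≤ t then ⊤ else if t ≤ -1 then ⊥ else ((2 * artanh t : ℝ) : EReal)

/-- Variable-node convolution `⊛` of two (nonnegative) measures:
`(μ ⊛ ν)(E) = ∫ μ(E - α) ν(dα)`, i.e. the pushforward of `μ × ν` under addition. -/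
def mConv (μ ν : Measure EReal) : Measure EReal :=
  (μ.prod ν).map fun p => p.1 + p.2

/-- Check-node convolution `⊠` of two (nonnegative) measures:
`(μ ⊠ ν)(E) = ∫ μ(2 tanh⁻¹(tanh(E/2) / tanh(α/2))) ν(dα)`, where the argument of `μ`
is the image of `E` under `β ↦ 2 tanh⁻¹(tanh(β/2) / tanh(α/2))`; equivalently, the
pushforward of `μ × ν` under `(β, α) ↦ 2 tanh⁻¹(tanh(β/2) · tanh(α/2))`. -/
def mCheck (μ ν : Measure EReal) : Measure EReal :=
  (μ.prod ν).map fun p => atanhTwo (tanhHalf p.1 * tanhHalf p.2)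

instance (μ ν : Measure EReal) [IsFiniteMeasure μ] [IsFiniteMeasure ν] :
    IsFiniteMeasure (mConv μ ν) := by unfold mConv; infer_instance

instance (μ ν : Measure EReal) [IsFiniteMeasure μ] [IsFiniteMeasure ν] :
    IsFiniteMeasure (mCheck μ ν) := by unfold mCheck; infer_instance

/-- The variable-node operation `⊛` extended bilinearly to finite signed measures. -/
def sConv (x y : SM) : SM :=
  (mConv (jp x) (jp y)).toSignedMeasure - (mConv (jp x) (jn y)).toSignedMeasure
    - (mConv (jn x) (jp y)).toSignedMeasure + (mConv (jn x) (jn y)).toSignedMeasure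

/-- The check-node operation `⊠` extended bilinearly to finite signed measures. -/
def sCheck (x y : SM) : SM :=
  (mCheck (jp x) (jp y)).toSignedMeasure - (mCheck (jp x) (jn y)).toSignedMeasure
    - (mCheck (jn x) (jp y)).toSignedMeasure + (mCheck (jn x) (jn y)).toSignedMeasure

/-- `I_f(x) = ∫ f(|tanh(α/2)|) x(dα)`. -/
def If (f : ℝ → ℝ) (x : SM) : ℝ := sInt (fun α => f |tanhHalf α|) x

/-- `x1` is degraded with respect to `x2` (written `x1 ⪰ x2`): `I_f(x1) ≥ I_f(x2)` for
every concave non-increasing `f : [0,1] → ℝ`. -/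
def Degraded (x1 x2 : SM) : Prop :=
  ∀ f : ℝ → ℝ, ConcaveOn ℝ (Set.Icc (0 : ℝ) 1) f → AntitoneOn f (Set.Icc (0 : ℝ) 1) →
    If f x2 ≤ If f x1

/-- `x1` is strictly degraded with respect to `x2` (written `x1 ≻ x2`). -/
def StrictlyDegraded (x1 x2 : SM) : Prop :=
  Degraded x1 x2 ∧ ∃ f : ℝ → ℝ, ConcaveOn ℝ (Set.Icc (0 : ℝ) 1) f ∧
    AntitoneOn f (Set.Icc (0 : ℝ) 1) ∧ If f x2 < If f x1


section Aux
open Real Set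


/-- clamp to [0,1] -/
def clamp (r : ℝ) : ℝ := min 1 (max r 0)

lemma clamp_mem (r : ℝ) : clamp r ∈ Icc (0:ℝ) 1 :=
  ⟨le_min zero_le_one (le_max_right _ _), min_le_left _ _⟩

lemma clamp_eq {r : ℝ} (h : r ∈ Icc (0:ℝ) 1) : clamp r = r := by
  rcases h with ⟨h0, h1⟩
  simp [clamp, max_eq_left h0, min_eq_right h1]

lemma clamp_mono : Monotone clamp := fun a b h =>
  min_le_min le_rfl (max_le_max h le_rfl)

variable {f : ℝ → ℝ}

lemma phi_anti (hanti : AntitoneOn f (Icc (0:ℝ) 1)) : Antitone (fun r => f (clamp r)) :=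
  fun a b h => hanti (clamp_mem a) (clamp_mem b) (clamp_mono h)

lemma phi_eq {r : ℝ} (h : r ∈ Icc (0:ℝ) 1) : f (clamp r) = f r := by rw [clamp_eq h]

lemma phi_concOn (hconc : ConcaveOn ℝ (Icc (0:ℝ) 1) f) :
    ConcaveOn ℝ (Icc (0:ℝ) 1) (fun r => f (clamp r)) := by
  refine ⟨convex_Icc _ _, fun x hx y hy p q hp hq hpq => ?_⟩
  have hz : p • x + q • y ∈ Icc (0:ℝ) 1 := (convex_Icc _ _) hx hy hp hq hpq
  simp only [phi_eq hx, phi_eq hy, phi_eq hz]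
  exact hconc.2 hx hy hp hq hpq

lemma phi_bound (hanti : AntitoneOn f (Icc (0:ℝ) 1)) (r : ℝ) :
    |f (clamp r)| ≤ max |f 0| |f 1| := by
  have h0 : (0:ℝ) ∈ Icc (0:ℝ) 1 := by constructor <;> norm_num
  have h1 : (1:ℝ) ∈ Icc (0:ℝ) 1 := by constructor <;> norm_num
  have hm := clamp_mem r
  have hle : f (clamp r) ≤ f 0 := hanti h0 hm hm.1
  have hge : f 1 ≤ f (clamp r) := hanti hm h1 hm.2
  rw [abs_le]
  constructor
  · calc -(max |f 0| |f 1|) ≤ -|f 1| := by simp [le_max_right]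
      _ ≤ f 1 := neg_abs_le _
      _ ≤ _ := hge
  · calc f (clamp r) ≤ f 0 := hle
      _ ≤ |f 0| := le_abs_self _
      _ ≤ _ := le_max_left _ _

/-- the perspective-type concavity lemma -/
lemma perspective {D : Set ℝ} (hD : Convex ℝ D) {a w : ℝ → ℝ}
    (haff : ∀ x y p q : ℝ, p + q = 1 → a (p*x+q*y) = p * a x + q * a y)
    (hapos : ∀ t ∈ D, 0 < a t) (hw : ConvexOn ℝ D w)
    (hw0 : ∀ t ∈ D, 0 ≤ w t) (hwa : ∀ t ∈ D, w t ≤ a t)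
    (hf : ConcaveOn ℝ (Icc (0:ℝ) 1) f) (hmono : AntitoneOn f (Icc (0:ℝ) 1)) :
    ConcaveOn ℝ D (fun t => a t * f (w t / a t)) := by
  refine ⟨hD, fun x hx y hy p q hp hq hpq => ?_⟩
  simp only [smul_eq_mul] at *
  set z := p * x + q * y with hzdef
  have hz : z ∈ D := by
    have := hD hx hy hp hq hpq; simpa [smul_eq_mul] using this
  have hax : 0 < a x := hapos x hx
  have hay : 0 < a y := hapos y hy
  have haz : 0 < a z := hapos z hz
  have hazeq : a z = p * a x + q * a y := haff x y p q hpq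
  set rx := w x / a x with hrx
  set ry := w y / a y with hry
  have hrxm : rx ∈ Icc (0:ℝ) 1 :=
    ⟨div_nonneg (hw0 x hx) hax.le, div_le_one_of_le₀ (hwa x hx) hax.le⟩
  have hrym : ry ∈ Icc (0:ℝ) 1 :=
    ⟨div_nonneg (hw0 y hy) hay.le, div_le_one_of_le₀ (hwa y hy) hay.le⟩
  set p' := p * a x / a z with hp'
  set q' := q * a y / a z with hq'
  have hp'0 : 0 ≤ p' := div_nonneg (mul_nonneg hp hax.le) haz.le
  have hq'0 : 0 ≤ q' := div_nonneg (mul_nonneg hq hay.le) haz.le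
  have hp'q' : p' + q' = 1 := by
    rw [hp', hq']
    linear_combination (mul_inv_cancel₀ haz.ne') - (a z)⁻¹ * hazeq
  set rbar := p' * rx + q' * ry with hrbar
  have hrbarm : rbar ∈ Icc (0:ℝ) 1 := by
    constructor
    · exact add_nonneg (mul_nonneg hp'0 hrxm.1) (mul_nonneg hq'0 hrym.1)
    · calc p' * rx + q' * ry ≤ p' * 1 + q' * 1 := by
            gcongr <;> [exact hrxm.2; exact hrym.2]
        _ = 1 := by rw [mul_one, mul_one, hp'q']
  have hwz : w z ≤ p * w x + q * w y := by
    have := hw.2 hx hy hp hq hpq; simpa [smul_eq_mul] using this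
  have hrz : w z / a z ∈ Icc (0:ℝ) 1 :=
    ⟨div_nonneg (hw0 z hz) haz.le, div_le_one_of_le₀ (hwa z hz) haz.le⟩
  have hle : w z / a z ≤ rbar := by
    rw [div_le_iff₀ haz]
    have e1 : rbar * a z = p * (rx * a x) + q * (ry * a y) := by
      rw [hrbar, hp', hq']
      linear_combination (p * a x * rx + q * a y * ry) * (mul_inv_cancel₀ haz.ne')
    have e2 : rx * a x = w x := by rw [hrx]; linear_combination (w x) * (mul_inv_cancel₀ hax.ne')
    have e3 : ry * a y = w y := by rw [hry]; linear_combination (w y) * (mul_inv_cancel₀ hay.ne')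
    rw [e1, e2, e3]; exact hwz
  have step1 : f rbar ≤ f (w z / a z) := hmono hrz hrbarm hle
  have step2 : p' • f rx + q' • f ry ≤ f (p' • rx + q' • ry) :=
    hf.2 hrxm hrym hp'0 hq'0 hp'q'
  simp only [smul_eq_mul] at step2
  have step3 : p' * f rx + q' * f ry ≤ f (w z / a z) := by
    calc p' * f rx + q' * f ry ≤ f rbar := step2
      _ ≤ _ := step1
  calc p * (a x * f rx) + q * (a y * f ry)
      = a z * (p' * f rx + q' * f ry) := by
          rw [hp', hq']
          linear_combination (-(p * a x * f rx + q * a y * f ry)) * (mul_inv_cancel₀ haz.ne')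
    _ ≤ a z * f (w z / a z) := by
        exact mul_le_mul_of_nonneg_left step3 haz.le



variable {f : ℝ → ℝ}

/-- the symmetrized variable-node kernel -/
def gK (φ : ℝ → ℝ) (s t : ℝ) : ℝ :=
  (1+t*s)/2 * φ (|t+s|/(1+t*s)) + (1-t*s)/2 * φ (|t-s|/(1-t*s))

lemma convexOn_abs_affine (s : ℝ) (D : Set ℝ) (hD : Convex ℝ D) :
    ConvexOn ℝ D (fun t => |t + s|) := by
  refine ⟨hD, fun x hx y hy p q hp hq hpq => ?_⟩
  simp only [smul_eq_mul]
  have e : p * x + q * y + s = p * (x + s) + q * (y + s) := by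
    linear_combination (-s : ℝ) * hpq
  rw [e]
  calc |p * (x + s) + q * (y + s)| ≤ |p * (x+s)| + |q * (y+s)| := abs_add_le _ _
    _ = p * |x+s| + q * |y+s| := by
        rw [abs_mul, abs_mul, abs_of_nonneg hp, abs_of_nonneg hq]

lemma concaveOn_congr' {D : Set ℝ} {g h : ℝ → ℝ} (hgh : ∀ t ∈ D, g t = h t)
    (hh : ConcaveOn ℝ D h) : ConcaveOn ℝ D g := by
  refine ⟨hh.1, fun x hx y hy p q hp hq hpq => ?_⟩
  rw [hgh x hx, hgh y hy, hgh _ (hh.1 hx hy hp hq hpq)]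
  exact hh.2 hx hy hp hq hpq

lemma gK_concave (hconc : ConcaveOn ℝ (Icc (0:ℝ) 1) f) (hanti : AntitoneOn f (Icc (0:ℝ) 1))
    {s : ℝ} (hs : s ∈ Icc (0:ℝ) 1) :
    ConcaveOn ℝ (Icc (-1:ℝ) 1) (gK f s) := by
  rcases eq_or_lt_of_le hs.2 with hs1 | hs1
  · -- s = 1 : constant
    have : ∀ t ∈ Icc (-1:ℝ) 1, gK f s t = f 1 := by
      intro t ht
      subst hs1
      rcases eq_or_lt_of_le ht.2 with h1 | h1
      · subst h1; norm_num [gK]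
      rcases eq_or_lt_of_le ht.1 with h2 | h2
      · rw [← h2]; norm_num [gK]
      have hpos : 0 < 1 + t := by linarith
      have hneg : 0 < 1 - t := by linarith
      have e1 : |t + 1| = 1 + t := by rw [abs_of_pos (by linarith)]; ring
      have e2 : |t - 1| = 1 - t := by rw [abs_of_neg (by linarith)]; ring
      simp only [gK, mul_one, e1, e2]
      rw [div_self hpos.ne', div_self hneg.ne']
      ring
    exact concaveOn_congr' this (concaveOn_const _ (convex_Icc _ _))
  · -- s < 1
    have hs0 := hs.1
    have h1 : ConcaveOn ℝ (Icc (-1:ℝ) 1)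
        (fun t => (1 + t*s) * f (|t + s| / (1 + t*s))) := by
      exact perspective (f := f) (convex_Icc (-1:ℝ) 1) (a := fun t => 1 + t*s)
        (w := fun t => |t + s|)
        (by intro x y p q hpq
            show 1 + (p*x+q*y)*s = p * (1 + x*s) + q * (1 + y*s)
            linear_combination (-1 : ℝ) * hpq)
        (by intro t ht; show (0:ℝ) < 1 + t * s; nlinarith [ht.1, ht.2])
        (convexOn_abs_affine s _ (convex_Icc _ _))
        (by intro t ht; positivity)
        (by intro t ht; show |t + s| ≤ 1 + t * s
            rw [abs_le]; constructor <;> nlinarith [ht.1, ht.2])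
        hconc hanti
    have h2 : ConcaveOn ℝ (Icc (-1:ℝ) 1)
        (fun t => (1 - t*s) * f (|t - s| / (1 - t*s))) := by
      have key := perspective (f := f) (convex_Icc (-1:ℝ) 1) (a := fun t => 1 - t*s)
        (w := fun t => |t + (-s)|)
        (by intro x y p q hpq
            show 1 - (p*x+q*y)*s = p * (1 - x*s) + q * (1 - y*s)
            linear_combination (-1 : ℝ) * hpq)
        (by intro t ht; show (0:ℝ) < 1 - t * s; nlinarith [ht.1, ht.2])
        (convexOn_abs_affine (-s) _ (convex_Icc _ _))
        (by intro t ht; positivity)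
        (by intro t ht; show |t + (-s)| ≤ 1 - t * s
            rw [abs_le]; constructor <;> nlinarith [ht.1, ht.2])
        hconc hanti
      refine concaveOn_congr' (fun t ht => ?_) key
      simp only [sub_eq_add_neg]
    have hsum := (h1.smul (by norm_num : (0:ℝ) ≤ 1/2)).add (h2.smul (by norm_num : (0:ℝ) ≤ 1/2))
    refine concaveOn_congr' (fun t ht => ?_) hsum
    simp only [gK, Pi.add_apply, smul_eq_mul]
    ring

lemma gK_even (φ : ℝ → ℝ) (s t : ℝ) : gK φ s (-t) = gK φ s t := by
  unfold gK
  have e1 : |-t + s| = |t - s| := by rw [← abs_neg]; ring_nf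
  have e2 : |-t - s| = |t + s| := by rw [← abs_neg]; ring_nf
  rw [e1, e2, show 1 + -t*s = 1 - t*s from by ring, show 1 - -t*s = 1 + t*s from by ring]
  ring

lemma even_concave_anti {g : ℝ → ℝ} (hg : ConcaveOn ℝ (Icc (-1:ℝ) 1) g)
    (he : ∀ t, g (-t) = g t) : AntitoneOn g (Icc (0:ℝ) 1) := by
  intro x hx y hy hxy
  rcases eq_or_lt_of_le hy.1 with h0 | h0
  · have : x = y := le_antisymm hxy (by rw [← h0]; exact hx.1)
    rw [this]
  · set p := (y + x) / (2*y) with hp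
    set q := (y - x) / (2*y) with hq
    have hp0 : 0 ≤ p := div_nonneg (by linarith [hx.1]) (by linarith)
    have hq0 : 0 ≤ q := div_nonneg (by linarith) (by linarith)
    have hpq : p + q = 1 := by
      rw [hp, hq, ← add_div]
      rw [div_eq_one_iff_eq (by positivity)]
      ring
    have hxeq : p * y + q * (-y) = x := by
      rw [hp, hq]
      field_simp
      ring
    have hym : y ∈ Icc (-1:ℝ) 1 := ⟨by linarith [hy.1], hy.2⟩
    have hnym : -y ∈ Icc (-1:ℝ) 1 := ⟨by linarith [hy.2], by linarith [hy.1]⟩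
    have := hg.2 hym hnym hp0 hq0 hpq
    simp only [smul_eq_mul] at this
    calc g y = p * g y + q * g y := by rw [← add_mul, hpq, one_mul]
      _ = p * g y + q * g (-y) := by rw [he y]
      _ ≤ g (p * y + q * (-y)) := this
      _ = g x := by rw [hxeq]

lemma gK_concave01 (hconc : ConcaveOn ℝ (Icc (0:ℝ) 1) f) (hanti : AntitoneOn f (Icc (0:ℝ) 1))
    {s : ℝ} (hs : s ∈ Icc (0:ℝ) 1) : ConcaveOn ℝ (Icc (0:ℝ) 1) (gK f s) :=
  (gK_concave hconc hanti hs).subset (fun t ht => ⟨by linarith [ht.1], ht.2⟩) (convex_Icc _ _)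

lemma gK_anti (hconc : ConcaveOn ℝ (Icc (0:ℝ) 1) f) (hanti : AntitoneOn f (Icc (0:ℝ) 1))
    {s : ℝ} (hs : s ∈ Icc (0:ℝ) 1) : AntitoneOn (gK f s) (Icc (0:ℝ) 1) :=
  even_concave_anti (gK_concave hconc hanti hs) (gK_even f s)

/-! ### tanh toolkit -/

lemma tanh_eq_exp (x : ℝ) : Real.tanh x = (exp (2*x) - 1) / (exp (2*x) + 1) := by
  rw [Real.tanh_eq_sinh_div_cosh, Real.sinh_eq, Real.cosh_eq]
  have h1 : exp x ≠ 0 := (exp_pos x).ne'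
  have h2 : exp (2*x) = exp x * exp x := by
    rw [two_mul, exp_add]
  have h3 : exp (2*x) + 1 > 0 := by positivity
  rw [h2]
  have hneg : exp (-x) = (exp x)⁻¹ := exp_neg x
  rw [hneg]
  field_simp

lemma tanh_lt_one' (x : ℝ) : Real.tanh x < 1 := by
  rw [tanh_eq_exp]
  have h : (0:ℝ) < exp (2*x) + 1 := by positivity
  rw [div_lt_one h]
  linarith

lemma neg_one_lt_tanh' (x : ℝ) : -1 < Real.tanh x := by
  rw [tanh_eq_exp]
  have h : (0:ℝ) < exp (2*x) + 1 := by positivity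
  rw [lt_div_iff₀ h]
  nlinarith [exp_pos (2*x)]

lemma abs_tanh_lt_one (x : ℝ) : |Real.tanh x| < 1 :=
  abs_lt.2 ⟨neg_one_lt_tanh' x, tanh_lt_one' x⟩

lemma tanh_neg' (x : ℝ) : Real.tanh (-x) = -Real.tanh x := Real.tanh_neg x

/-- addition formula in half-angle form -/
lemma tanh_half_add (x y : ℝ) :
    Real.tanh ((x + y)/2) = (Real.tanh (x/2) + Real.tanh (y/2)) /
      (1 + Real.tanh (x/2) * Real.tanh (y/2)) := by
  have hu : exp (2*((x+y)/2)) = exp (2*(x/2)) * exp (2*(y/2)) := by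
    rw [← exp_add]; congr 1; ring
  rw [tanh_eq_exp, tanh_eq_exp, tanh_eq_exp, hu]
  set u := exp (2*(x/2)) with hudef
  set v := exp (2*(y/2)) with hvdef
  have hu0 : 0 < u := exp_pos _
  have hv0 : 0 < v := exp_pos _
  have h1 : u + 1 > 0 := by linarith
  have h2 : v + 1 > 0 := by linarith
  have h3 : u * v + 1 > 0 := by positivity
  have hden : 1 + (u - 1) / (u + 1) * ((v - 1) / (v + 1)) =
      (2 * (u*v + 1)) / ((u+1)*(v+1)) := by
    field_simp
    ring
  have hD : 1 + (u - 1) / (u + 1) * ((v - 1) / (v + 1)) ≠ 0 := by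
    rw [hden]; positivity
  rw [eq_div_iff hD, hden]
  field_simp
  ring

/-- tanh of artanh -/
lemma tanh_artanh' {r : ℝ} (h1 : -1 < r) (h2 : r < 1) :
    Real.tanh (Real.log ((1+r)/(1-r)) / 2) = r := by
  have hpos : (0:ℝ) < (1+r)/(1-r) := by
    apply div_pos <;> linarith
  rw [tanh_eq_exp]
  have he : exp (2 * (Real.log ((1+r)/(1-r)) / 2)) = (1+r)/(1-r) := by
    rw [show 2 * (Real.log ((1+r)/(1-r)) / 2) = Real.log ((1+r)/(1-r)) from by ring]
    exact exp_log hpos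
  rw [he]
  have h1r : (1:ℝ) - r ≠ 0 := by linarith
  rw [div_eq_iff]
  · field_simp
    ring
  · have : (1+r)/(1-r) + 1 = 2/(1-r) := by field_simp; ring
    rw [this]
    positivity


end Aux

section ERealAux
open Real Set MeasureTheory

lemma tanhHalf_top : tanhHalf ⊤ = 1 := by simp [tanhHalf]
lemma tanhHalf_bot : tanhHalf ⊥ = -1 := by simp [tanhHalf]
lemma tanhHalf_coe (x : ℝ) : tanhHalf (x : EReal) = Real.tanh (x/2) := by
  simp [tanhHalf, EReal.coe_ne_top, EReal.coe_ne_bot]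

lemma abs_tanhHalf_le (α : EReal) : |tanhHalf α| ≤ 1 := by
  induction α using EReal.rec with
  | bot => simp [tanhHalf_bot]
  | coe x => rw [tanhHalf_coe]; exact (abs_tanh_lt_one _).le
  | top => simp [tanhHalf_top]

lemma abs_tanhHalf_mem (α : EReal) : |tanhHalf α| ∈ Icc (0:ℝ) 1 :=
  ⟨abs_nonneg _, abs_tanhHalf_le α⟩

lemma tanhHalf_mem (α : EReal) : tanhHalf α ∈ Icc (-1:ℝ) 1 := by
  have := abs_tanhHalf_le α; rw [abs_le] at this; exact ⟨this.1, this.2⟩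

lemma tanhHalf_neg (α : EReal) : tanhHalf (-α) = -tanhHalf α := by
  induction α using EReal.rec with
  | bot => show tanhHalf (-⊥) = _; rw [show -(⊥:EReal) = ⊤ from rfl, tanhHalf_top, tanhHalf_bot]; norm_num
  | coe x =>
      rw [show -(x:EReal) = ((-x : ℝ):EReal) from by rw [EReal.coe_neg], tanhHalf_coe, tanhHalf_coe,
        show -x/2 = -(x/2) from by ring, Real.tanh_neg]
  | top => show tanhHalf (-⊤) = _; rw [show -(⊤:EReal) = ⊥ from rfl, tanhHalf_top, tanhHalf_bot]

lemma continuous_tanh' : Continuous Real.tanh := by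
  have h : Real.tanh = fun x => Real.sinh x / Real.cosh x :=
    funext (fun x => Real.tanh_eq_sinh_div_cosh x)
  rw [h]
  exact Real.continuous_sinh.div Real.continuous_cosh (fun x => (Real.cosh_pos x).ne')

lemma measurable_tanhHalf : Measurable tanhHalf := by
  apply EReal.measurable_of_measurable_real
  simp only [tanhHalf_coe]
  exact (continuous_tanh'.comp (continuous_id.div_const 2)).measurable

lemma measurable_ereal_neg : Measurable (fun a : EReal => -a) :=
  measurable_neg

lemma measurable_ereal_add : Measurable (fun p : EReal × EReal => p.1 + p.2) := by
  classical
  have hform : ∀ p : EReal × EReal, p.1 + p.2 =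
      if p.1 = ⊥ ∨ p.2 = ⊥ then (⊥ : EReal)
      else if p.1 = ⊤ ∨ p.2 = ⊤ then ⊤
      else ((p.1.toReal + p.2.toReal : ℝ) : EReal) := by
    rintro ⟨x, y⟩
    induction x using EReal.rec with
    | bot => simp
    | top =>
        induction y using EReal.rec with
        | bot => simp
        | coe b => simp [EReal.top_add_coe]
        | top => simp [EReal.top_add_top]
    | coe a =>
        induction y using EReal.rec with
        | bot => simp
        | coe b => simp [← EReal.coe_add]
        | top => simp [EReal.coe_add_top]
  have hmeas1 : MeasurableSet {p : EReal × EReal | p.1 = ⊥ ∨ p.2 = ⊥} := by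
    have : {p : EReal × EReal | p.1 = ⊥ ∨ p.2 = ⊥} =
        (Prod.fst ⁻¹' {⊥}) ∪ (Prod.snd ⁻¹' {⊥}) := by ext p; simp [Set.mem_union]
    rw [this]
    exact (measurable_fst (measurableSet_singleton _)).union
      (measurable_snd (measurableSet_singleton _))
  have hmeas2 : MeasurableSet {p : EReal × EReal | p.1 = ⊤ ∨ p.2 = ⊤} := by
    have : {p : EReal × EReal | p.1 = ⊤ ∨ p.2 = ⊤} =
        (Prod.fst ⁻¹' {⊤}) ∪ (Prod.snd ⁻¹' {⊤}) := by ext p; simp [Set.mem_union]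
    rw [this]
    exact (measurable_fst (measurableSet_singleton _)).union
      (measurable_snd (measurableSet_singleton _))
  have : (fun p : EReal × EReal => p.1 + p.2) =
      fun p => if p.1 = ⊥ ∨ p.2 = ⊥ then (⊥ : EReal)
      else if p.1 = ⊤ ∨ p.2 = ⊤ then ⊤
      else ((p.1.toReal + p.2.toReal : ℝ) : EReal) := funext hform
  rw [this]
  refine Measurable.ite hmeas1 measurable_const (Measurable.ite hmeas2 measurable_const ?_)
  exact measurable_coe_real_ereal.comp
    ((measurable_fst.ereal_toReal).add (measurable_snd.ereal_toReal))

lemma measurable_artanh : Measurable artanh := by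
  unfold artanh
  exact ((Real.measurable_log.comp ((measurable_const.add measurable_id).div
    (measurable_const.sub measurable_id))).div_const 2)

lemma measurable_atanhTwo : Measurable atanhTwo := by
  classical
  unfold atanhTwo
  refine Measurable.ite ?_ measurable_const (Measurable.ite ?_ measurable_const ?_)
  · exact measurableSet_le measurable_const measurable_id
  · exact measurableSet_le measurable_id measurable_const
  · exact measurable_coe_real_ereal.comp ((measurable_artanh).const_mul 2)

lemma tanhHalf_atanhTwo {r : ℝ} (h : |r| ≤ 1) : tanhHalf (atanhTwo r) = r := by
  rcases eq_or_lt_of_le (abs_le.mp h).2 with h1 | h1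
  · subst h1; simp [atanhTwo, tanhHalf_top]
  rcases eq_or_lt_of_le (abs_le.mp h).1 with h2 | h2
  · subst h2; norm_num [atanhTwo, tanhHalf_bot]
  have hne1 : ¬ (1 ≤ r) := not_le.mpr h1
  have hne2 : ¬ (r ≤ -1) := not_le.mpr h2
  rw [atanhTwo, if_neg hne1, if_neg hne2, tanhHalf_coe]
  rw [show (2 * artanh r) / 2 = artanh r from by ring]
  exact tanh_artanh' h2 h1

end ERealAux

section SymmAux
open Real Set MeasureTheory ENNReal NNReal

lemma measurable_wt : Measurable wt := by
  classical
  unfold wt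
  refine Measurable.ite (measurableSet_singleton _) measurable_const
    (Measurable.ite (measurableSet_singleton _) measurable_const ?_)
  exact ENNReal.measurable_ofReal.comp
    ((Real.measurable_exp.comp (measurable_ereal_toReal.neg.div_const 2)))

lemma wt_top : wt ⊤ = 0 := by simp [wt]
lemma wt_bot : wt ⊥ = ⊤ := by simp [wt]

lemma neg_preimage_bot : (fun a : EReal => -a) ⁻¹' {⊥} = {⊤} := by
  ext a
  simp only [Set.mem_preimage, Set.mem_singleton_iff]
  constructor
  · intro h; rw [← neg_neg a, h]; rfl
  · intro h; rw [h]; rfl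

lemma symm_bot_null {μ : Measure EReal} (hsym : IsSymmMeasure μ) : μ {⊥} = 0 := by
  have h := hsym {⊥} (measurableSet_singleton _)
  rw [neg_preimage_bot] at h
  rw [Measure.restrict_singleton, Measure.restrict_singleton] at h
  simp only [lintegral_smul_measure, lintegral_dirac] at h
  rw [wt_top, wt_bot] at h
  simp only [smul_eq_mul, mul_zero] at h
  by_contra hne
  rw [ENNReal.mul_top hne] at h
  exact (by simp at h)

lemma nuw_map_neg {μ : Measure EReal} (hsym : IsSymmMeasure μ) :
    (μ.withDensity wt).map (fun a : EReal => -a) = μ.withDensity wt := by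
  ext E hE
  rw [Measure.map_apply measurable_ereal_neg hE,
    withDensity_apply _ (measurable_ereal_neg hE), withDensity_apply _ hE]
  exact hsym E hE

/-- the even weight `1/(2 cosh(α/2))` -/
def cw : EReal → ℝ≥0∞ := fun α =>
  if α = ⊥ then 0 else if α = ⊤ then 0 else ENNReal.ofReal (1/(2*Real.cosh (α.toReal/2)))

lemma measurable_cw : Measurable cw := by
  classical
  unfold cw
  refine Measurable.ite (measurableSet_singleton _) measurable_const
    (Measurable.ite (measurableSet_singleton _) measurable_const ?_)
  exact ENNReal.measurable_ofReal.comp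
    ((measurable_const.div ((measurable_ereal_toReal.div_const 2).cosh.const_mul 2)))

lemma cw_neg (α : EReal) : cw (-α) = cw α := by
  induction α using EReal.rec with
  | bot => simp [cw, show -(⊥:EReal) = ⊤ from rfl]
  | top => simp [cw, show -(⊤:EReal) = ⊥ from rfl]
  | coe x =>
      rw [show -(x:EReal) = ((-x : ℝ):EReal) from by rw [EReal.coe_neg]]
      simp only [cw, EReal.coe_ne_top, EReal.coe_ne_bot, if_false, EReal.toReal_coe]
      rw [show -x/2 = -(x/2) from by ring, Real.cosh_neg]

lemma psi_eq_cw_wt {α : EReal} (h : α ≠ ⊥) :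
    ENNReal.ofReal ((1 - tanhHalf α)/2) = cw α * wt α := by
  induction α using EReal.rec with
  | bot => exact absurd rfl h
  | top => simp [cw, wt, tanhHalf_top]
  | coe x =>
      simp only [cw, wt, tanhHalf_coe, EReal.coe_ne_top, EReal.coe_ne_bot, if_false,
        EReal.toReal_coe]
      rw [← ENNReal.ofReal_mul (by positivity)]
      congr 1
      rw [Real.tanh_eq_sinh_div_cosh, Real.sinh_eq, Real.cosh_eq]
      have hpos : (0:ℝ) < rexp (x/2) + rexp (-(x/2)) := by positivity
      rw [show -x/2 = -(x/2) from by ring]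
      field_simp
      ring

lemma rho_map_neg {μ : Measure EReal} (hsym : IsSymmMeasure μ) :
    (μ.withDensity (fun α => ENNReal.ofReal ((1 - tanhHalf α)/2))).map (fun a : EReal => -a)
      = μ.withDensity (fun α => ENNReal.ofReal ((1 - tanhHalf α)/2)) := by
  set ψ : EReal → ℝ≥0∞ := fun α => ENNReal.ofReal ((1 - tanhHalf α)/2) with hψ
  have hψm : Measurable ψ := by
    exact ENNReal.measurable_ofReal.comp ((measurable_const.sub measurable_tanhHalf).div_const 2)
  have hbot : μ {⊥} = 0 := symm_bot_null hsym
  have haene : ∀ᵐ α ∂μ, α ≠ ⊥ := by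
    rw [MeasureTheory.ae_iff]
    simpa using hbot
  have key : ∀ (S : Set EReal), MeasurableSet S →
      ∫⁻ a in S, ψ a ∂μ = ∫⁻ a, S.indicator cw a ∂(μ.withDensity wt) := by
    intro S hS
    rw [lintegral_withDensity_eq_lintegral_mul μ measurable_wt (measurable_cw.indicator hS)]
    rw [← lintegral_indicator hS]
    apply lintegral_congr_ae
    filter_upwards [haene] with α hα
    by_cases hmem : α ∈ S
    · simp only [Pi.mul_apply, Set.indicator_of_mem hmem, hψ]
      rw [psi_eq_cw_wt hα, mul_comm]
    · simp [Set.indicator_of_notMem hmem]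
  ext E hE
  rw [Measure.map_apply measurable_ereal_neg hE,
    withDensity_apply _ (measurable_ereal_neg hE), withDensity_apply _ hE,
    key _ (measurable_ereal_neg hE), key _ hE]
  have hpt : ∀ a : EReal, ((fun b : EReal => -b) ⁻¹' E).indicator cw a
      = E.indicator cw (-a) := by
    intro a
    by_cases hmem : -a ∈ E
    · rw [Set.indicator_of_mem hmem, Set.indicator_of_mem (by exact hmem), cw_neg]
    · rw [Set.indicator_of_notMem hmem, Set.indicator_of_notMem (by exact hmem)]
  calc ∫⁻ a, ((fun b : EReal => -b) ⁻¹' E).indicator cw a ∂(μ.withDensity wt)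
      = ∫⁻ a, E.indicator cw (-a) ∂(μ.withDensity wt) := by
        apply lintegral_congr; exact hpt
    _ = ∫⁻ b, E.indicator cw b ∂((μ.withDensity wt).map (fun a : EReal => -a)) :=
        (lintegral_map (measurable_cw.indicator hE) measurable_ereal_neg).symm
    _ = ∫⁻ b, E.indicator cw b ∂(μ.withDensity wt) := by rw [nuw_map_neg hsym]

lemma integrable_of_bdd {δ : Type*} [MeasurableSpace δ] {μ : Measure δ} [IsFiniteMeasure μ]
    {h : δ → ℝ} (hm : AEStronglyMeasurable h μ) {C : ℝ} (hb : ∀ a, |h a| ≤ C) :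
    Integrable h μ :=
  ⟨hm, HasFiniteIntegral.of_bounded (C := C) (ae_of_all _ (by
    intro a; rw [Real.norm_eq_abs]; exact hb a))⟩

/-- the fundamental symmetrization identity -/
lemma symm_integral {μ : Measure EReal} [IsFiniteMeasure μ] (hsym : IsSymmMeasure μ)
    {h : EReal → ℝ} (hm : Measurable h) {C : ℝ} (hb : ∀ a, |h a| ≤ C) :
    ∫ α, h α ∂μ
      = ∫ α, (((1 + tanhHalf α)/2) * h α + ((1 - tanhHalf α)/2) * h (-α)) ∂μ := by
  have hC0 : 0 ≤ C := le_trans (abs_nonneg _) (hb ⊥)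
  have hwle : ∀ α : EReal, 0 ≤ (1 - tanhHalf α)/2 ∧ (1 - tanhHalf α)/2 ≤ 1 := by
    intro α
    have := tanhHalf_mem α
    constructor <;> [linarith [this.2]; linarith [this.1]]
  have hwle' : ∀ α : EReal, 0 ≤ (1 + tanhHalf α)/2 ∧ (1 + tanhHalf α)/2 ≤ 1 := by
    intro α
    have := tanhHalf_mem α
    constructor <;> [linarith [this.1]; linarith [this.2]]
  set w : EReal → ℝ≥0 := fun α => Real.toNNReal ((1 - tanhHalf α)/2) with hwdef
  have hwm : Measurable w :=
    measurable_real_toNNReal.comp ((measurable_const.sub measurable_tanhHalf).div_const 2)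
  have hcoe : (fun α => (w α : ℝ≥0∞)) = fun α => ENNReal.ofReal ((1 - tanhHalf α)/2) := rfl
  set ρ : Measure EReal := μ.withDensity (fun α => (w α : ℝ≥0∞)) with hρdef
  have hρneg : ρ.map (fun a : EReal => -a) = ρ := by
    rw [hρdef, hcoe]; exact rho_map_neg hsym
  have hsmul1 : ∫ a, h (-a) ∂ρ = ∫ a, ((1 - tanhHalf a)/2) * h (-a) ∂μ := by
    rw [hρdef, integral_withDensity_eq_integral_smul hwm (fun a => h (-a))]
    apply integral_congr_ae; apply ae_of_all; intro a
    show w a • h (-a) = (1 - tanhHalf a)/2 * h (-a)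
    rw [NNReal.smul_def, Real.coe_toNNReal _ (hwle a).1, smul_eq_mul]
  have hsmul2 : ∫ a, h a ∂ρ = ∫ a, ((1 - tanhHalf a)/2) * h a ∂μ := by
    rw [hρdef, integral_withDensity_eq_integral_smul hwm h]
    apply integral_congr_ae; apply ae_of_all; intro a
    show w a • h a = (1 - tanhHalf a)/2 * h a
    rw [NNReal.smul_def, Real.coe_toNNReal _ (hwle a).1, smul_eq_mul]
  have hmapint : ∫ b, h b ∂(ρ.map (fun a : EReal => -a)) = ∫ a, h (-a) ∂ρ :=
    integral_map measurable_ereal_neg.aemeasurable hm.aestronglyMeasurable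
  have hkey : ∫ a, ((1 - tanhHalf a)/2) * h (-a) ∂μ = ∫ a, ((1 - tanhHalf a)/2) * h a ∂μ := by
    rw [← hsmul1, ← hsmul2, ← hmapint, hρneg]
  have hint1 : Integrable (fun α => ((1 + tanhHalf α)/2) * h α) μ := by
    apply integrable_of_bdd (C := C)
    · exact (((measurable_const.add measurable_tanhHalf).div_const 2).mul hm).aestronglyMeasurable
    · intro a
      rw [abs_mul]
      calc |(1 + tanhHalf a)/2| * |h a| ≤ 1 * C := by
            apply mul_le_mul _ (hb a) (abs_nonneg _) zero_le_one
            rw [abs_of_nonneg (hwle' a).1]; exact (hwle' a).2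
        _ = C := one_mul C
  have hint2 : Integrable (fun α => ((1 - tanhHalf α)/2) * h (-α)) μ := by
    apply integrable_of_bdd (C := C)
    · exact (((measurable_const.sub measurable_tanhHalf).div_const 2).mul
        (hm.comp measurable_ereal_neg)).aestronglyMeasurable
    · intro a
      rw [abs_mul]
      calc |(1 - tanhHalf a)/2| * |h (-a)| ≤ 1 * C := by
            apply mul_le_mul _ (hb (-a)) (abs_nonneg _) zero_le_one
            rw [abs_of_nonneg (hwle a).1]; exact (hwle a).2
        _ = C := one_mul C
  have hint2' : Integrable (fun α => ((1 - tanhHalf α)/2) * h α) μ := by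
    apply integrable_of_bdd (C := C)
    · exact (((measurable_const.sub measurable_tanhHalf).div_const 2).mul hm).aestronglyMeasurable
    · intro a
      rw [abs_mul]
      calc |(1 - tanhHalf a)/2| * |h a| ≤ 1 * C := by
            apply mul_le_mul _ (hb a) (abs_nonneg _) zero_le_one
            rw [abs_of_nonneg (hwle a).1]; exact (hwle a).2
        _ = C := one_mul C
  rw [integral_add hint1 hint2, hkey, ← integral_add hint1 hint2']
  apply integral_congr_ae; apply ae_of_all; intro a
  simp only
  ring

end SymmAux

section StructAux
open Real Set MeasureTheory

lemma jordan_of_measure (ν : Measure EReal) [IsFiniteMeasure ν] :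
    (ν.toSignedMeasure).toJordanDecomposition =
      ⟨ν, 0, MeasureTheory.Measure.MutuallySingular.zero_right⟩ := by
  set j : JordanDecomposition EReal := ⟨ν, 0, MeasureTheory.Measure.MutuallySingular.zero_right⟩
    with hj
  have h : j.toSignedMeasure = ν.toSignedMeasure := by
    rw [JordanDecomposition.toSignedMeasure]
    show ν.toSignedMeasure - (0 : Measure EReal).toSignedMeasure = _
    rw [Measure.toSignedMeasure_zero, sub_zero]
  rw [← h, JordanDecomposition.toJordanDecomposition_toSignedMeasure]

lemma jp_of_measure (ν : Measure EReal) [IsFiniteMeasure ν] : jp (ν.toSignedMeasure) = ν := by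
  unfold jp; rw [jordan_of_measure]

lemma jn_of_measure (ν : Measure EReal) [IsFiniteMeasure ν] : jn (ν.toSignedMeasure) = 0 := by
  unfold jn; rw [jordan_of_measure]

lemma If_eq {x : SM} {μ : Measure EReal} [IsFiniteMeasure μ]
    (hjp : jp x = μ) (hjn : jn x = 0) (g : ℝ → ℝ) :
    If g x = ∫ α, g |tanhHalf α| ∂μ := by
  unfold If sInt
  rw [hjp, hjn, integral_zero_measure, sub_zero]

lemma memX_repr {x : SM} (hx : MemX x) :
    ∃ μ : Measure EReal, IsProbabilityMeasure μ ∧ IsSymmMeasure μ ∧ jp x = μ ∧ jn x = 0 := by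
  obtain ⟨⟨μ, hμ, hxe⟩, hsm⟩ := hx
  haveI := hμ
  have hjp : jp x = μ := by rw [hxe]; exact jp_of_measure μ
  have hjn : jn x = 0 := by rw [hxe]; exact jn_of_measure μ
  exact ⟨μ, hμ, hjp ▸ hsm.1, hjp, hjn⟩

lemma mConv_zero_right (μ : Measure EReal) : mConv μ 0 = 0 := by
  unfold mConv; rw [Measure.prod_zero, Measure.map_zero]

lemma mConv_zero_left (μ : Measure EReal) : mConv 0 μ = 0 := by
  unfold mConv; rw [Measure.zero_prod, Measure.map_zero]

lemma mCheck_zero_right (μ : Measure EReal) : mCheck μ 0 = 0 := by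
  unfold mCheck; rw [Measure.prod_zero, Measure.map_zero]

lemma mCheck_zero_left (μ : Measure EReal) : mCheck 0 μ = 0 := by
  unfold mCheck; rw [Measure.zero_prod, Measure.map_zero]

lemma tsm_congr {ν1 ν2 : Measure EReal} [IsFiniteMeasure ν1] [IsFiniteMeasure ν2]
    (h : ν1 = ν2) : ν1.toSignedMeasure = ν2.toSignedMeasure := by
  subst h; rfl

lemma tsm_zero {ν : Measure EReal} [IsFiniteMeasure ν] (h : ν = 0) :
    ν.toSignedMeasure = 0 := by
  rw [tsm_congr h, Measure.toSignedMeasure_zero]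

lemma sConv_eq {x x3 : SM} {μ μ3 : Measure EReal} [IsFiniteMeasure μ] [IsFiniteMeasure μ3]
    (hjp : jp x = μ) (hjn : jn x = 0) (hjp3 : jp x3 = μ3) (hjn3 : jn x3 = 0) :
    sConv x x3 = (mConv μ μ3).toSignedMeasure := by
  unfold sConv
  rw [tsm_congr (show mConv (jp x) (jp x3) = mConv μ μ3 by rw [hjp, hjp3]),
    tsm_zero (show mConv (jp x) (jn x3) = 0 by rw [hjn3]; exact mConv_zero_right _),
    tsm_zero (show mConv (jn x) (jp x3) = 0 by rw [hjn]; exact mConv_zero_left _),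
    tsm_zero (show mConv (jn x) (jn x3) = 0 by rw [hjn]; exact mConv_zero_left _)]
  abel

lemma sCheck_eq {x x3 : SM} {μ μ3 : Measure EReal} [IsFiniteMeasure μ] [IsFiniteMeasure μ3]
    (hjp : jp x = μ) (hjn : jn x = 0) (hjp3 : jp x3 = μ3) (hjn3 : jn x3 = 0) :
    sCheck x x3 = (mCheck μ μ3).toSignedMeasure := by
  unfold sCheck
  rw [tsm_congr (show mCheck (jp x) (jp x3) = mCheck μ μ3 by rw [hjp, hjp3]),
    tsm_zero (show mCheck (jp x) (jn x3) = 0 by rw [hjn3]; exact mCheck_zero_right _),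
    tsm_zero (show mCheck (jn x) (jp x3) = 0 by rw [hjn]; exact mCheck_zero_left _),
    tsm_zero (show mCheck (jn x) (jn x3) = 0 by rw [hjn]; exact mCheck_zero_left _)]
  abel

lemma measurable_checkfn :
    Measurable (fun p : EReal × EReal => atanhTwo (tanhHalf p.1 * tanhHalf p.2)) :=
  measurable_atanhTwo.comp ((measurable_tanhHalf.comp measurable_fst).mul
    (measurable_tanhHalf.comp measurable_snd))

end StructAux

section KernelAux
open Real Set MeasureTheory

/-- first symmetrization (in the second variable) -/
def hat1 (F : EReal → ℝ) (β α : EReal) : ℝ :=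
  ((1 + tanhHalf α)/2) * F (β + α) + ((1 - tanhHalf α)/2) * F (β + (-α))

/-- second symmetrization (in the first variable) -/
def hat2 (F : EReal → ℝ) (β α : EReal) : ℝ :=
  ((1 + tanhHalf β)/2) * hat1 F β α + ((1 - tanhHalf β)/2) * hat1 F (-β) α

lemma kernel_ts (φ : ℝ → ℝ) {t s : ℝ} (ht : |t| < 1) (hs : |s| < 1) :
    ((1+t)/2) * ( ((1+s)/2) * φ (|t+s|/(1+t*s)) + ((1-s)/2) * φ (|t-s|/(1-t*s)) )
      + ((1-t)/2) * ( ((1+s)/2) * φ (|t-s|/(1-t*s)) + ((1-s)/2) * φ (|t+s|/(1+t*s)) )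
    = gK φ |s| |t| := by
  unfold gK
  rcases le_or_gt 0 t with ht0 | ht0 <;> rcases le_or_gt 0 s with hs0 | hs0
  · rw [abs_of_nonneg ht0, abs_of_nonneg hs0]
    ring
  · rw [abs_of_nonneg ht0, abs_of_neg hs0,
      show t + -s = t - s from by ring, show t - -s = t + s from by ring,
      show 1 + t * -s = 1 - t * s from by ring, show 1 - t * -s = 1 + t * s from by ring]
    ring
  · rw [abs_of_neg ht0, abs_of_nonneg hs0,
      show -t + s = -(t - s) from by ring, abs_neg,
      show -t - s = -(t + s) from by ring, abs_neg,
      show 1 + -t * s = 1 - t * s from by ring, show 1 - -t * s = 1 + t * s from by ring]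
    ring
  · rw [abs_of_neg ht0, abs_of_neg hs0,
      show -t + -s = -(t + s) from by ring, abs_neg,
      show -t - -s = -(t - s) from by ring, abs_neg,
      show 1 + -t * -s = 1 + t * s from by ring, show 1 - -t * -s = 1 - t * s from by ring]
    ring

lemma gK_s_one (φ : ℝ → ℝ) {s : ℝ} (hs : |s| < 1) : gK φ s 1 = φ 1 := by
  have h1 : (0:ℝ) < 1 + 1 * s := by rw [abs_lt] at hs; linarith [hs.1]
  have h2 : (0:ℝ) < 1 - 1 * s := by rw [abs_lt] at hs; linarith [hs.2]
  unfold gK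
  rw [abs_of_pos (show (0:ℝ) < 1 + s from by linarith), abs_of_pos (show (0:ℝ) < 1 - s from by linarith)]
  rw [show (1:ℝ) + s = 1 + 1 * s from by ring, show (1:ℝ) - s = 1 - 1 * s from by ring,
    div_self h1.ne', div_self h2.ne']
  ring

lemma gK_one_t (φ : ℝ → ℝ) {t : ℝ} (ht : |t| ≤ 1) : gK φ 1 t = φ 1 := by
  rw [abs_le] at ht
  rcases eq_or_lt_of_le ht.2 with h1 | h1
  · subst h1; norm_num [gK]
  rcases eq_or_lt_of_le ht.1 with h2 | h2
  · rw [← h2]; norm_num [gK]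
  have hp : (0:ℝ) < 1 + t * 1 := by linarith
  have hn : (0:ℝ) < 1 - t * 1 := by linarith
  unfold gK
  rw [abs_of_pos (show (0:ℝ) < t + 1 from by linarith),
    abs_of_neg (show t - 1 < (0:ℝ) from by linarith)]
  rw [show t + 1 = 1 + t * 1 from by ring, div_self hp.ne',
    show -(t - 1) = 1 - t * 1 from by ring, div_self hn.ne']
  ring

lemma kernel_real (φ : ℝ → ℝ) (b a : ℝ) :
    ((1 + tanh (b/2))/2) * ( ((1 + tanh (a/2))/2) * φ |tanh ((b+a)/2)|
        + ((1 - tanh (a/2))/2) * φ |tanh ((b + -a)/2)| )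
      + ((1 - tanh (b/2))/2) * ( ((1 + tanh (a/2))/2) * φ |tanh ((-b+a)/2)|
        + ((1 - tanh (a/2))/2) * φ |tanh ((-b + -a)/2)| )
    = gK φ |tanh (a/2)| |tanh (b/2)| := by
  set t := tanh (b/2) with htdef
  set s := tanh (a/2) with hsdef
  have ht : |t| < 1 := abs_tanh_lt_one _
  have hs : |s| < 1 := abs_tanh_lt_one _
  have hd1 : (0:ℝ) < 1 + t * s := by
    rw [abs_lt] at ht hs; nlinarith [ht.1, ht.2, hs.1, hs.2]
  have hd2 : (0:ℝ) < 1 - t * s := by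
    rw [abs_lt] at ht hs; nlinarith [ht.1, ht.2, hs.1, hs.2]
  have h1 : tanh ((b+a)/2) = (t+s)/(1+t*s) := tanh_half_add b a
  have h2 : tanh ((b + -a)/2) = (t-s)/(1-t*s) := by
    rw [tanh_half_add b (-a), show (-a)/2 = -(a/2) from by ring, Real.tanh_neg]
    rw [← htdef, ← hsdef]
    ring_nf
  have h3 : tanh ((-b+a)/2) = (s-t)/(1-t*s) := by
    rw [tanh_half_add (-b) a, show (-b)/2 = -(b/2) from by ring, Real.tanh_neg]
    rw [← htdef, ← hsdef]
    ring_nf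
  have h4 : tanh ((-b + -a)/2) = -((t+s)/(1+t*s)) := by
    rw [tanh_half_add (-b) (-a), show (-b)/2 = -(b/2) from by ring,
      show (-a)/2 = -(a/2) from by ring, Real.tanh_neg, Real.tanh_neg]
    rw [← htdef, ← hsdef]
    ring_nf
  rw [h1, h2, h3, h4]
  have e1 : |(t+s)/(1+t*s)| = |t+s|/(1+t*s) := by rw [abs_div, abs_of_pos hd1]
  have e2 : |(t-s)/(1-t*s)| = |t-s|/(1-t*s) := by rw [abs_div, abs_of_pos hd2]
  have e3 : |(s-t)/(1-t*s)| = |t-s|/(1-t*s) := by rw [abs_div, abs_of_pos hd2, abs_sub_comm]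
  have e4 : |-((t+s)/(1+t*s))| = |t+s|/(1+t*s) := by rw [abs_neg, e1]
  rw [e1, e2, e3, e4]
  exact kernel_ts φ ht hs

/-- the master pointwise identity -/
lemma hat2_eq (φ : ℝ → ℝ) {F : EReal → ℝ} (hF : ∀ γ, F γ = φ |tanhHalf γ|)
    {β α : EReal} (hβ : β ≠ ⊥) (hα : α ≠ ⊥) :
    hat2 F β α = gK φ |tanhHalf α| |tanhHalf β| := by
  unfold hat2 hat1
  simp only [hF]
  induction β using EReal.rec with
  | bot => exact absurd rfl hβ
  | top =>
      induction α using EReal.rec with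
      | bot => exact absurd rfl hα
      | top =>
          rw [tanhHalf_top, show -(⊤:EReal) = ⊥ from rfl,
            show (⊤:EReal) + ⊤ = ⊤ from rfl, show (⊤:EReal) + ⊥ = ⊥ from EReal.add_bot ⊤,
            show (⊥:EReal) + ⊤ = ⊥ from EReal.bot_add ⊤,
            show (⊥:EReal) + ⊥ = ⊥ from EReal.bot_add ⊥,
            tanhHalf_top, tanhHalf_bot]
          rw [show |(1:ℝ)| = 1 from abs_one, gK_one_t φ (by norm_num)]
          norm_num
      | coe a =>
          rw [tanhHalf_top, tanhHalf_coe]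
          have hs : |tanh (a/2)| < 1 := abs_tanh_lt_one _
          rw [show -(⊤:EReal) = ⊥ from rfl,
            show (⊤:EReal) + (a:EReal) = ⊤ from EReal.top_add_coe a,
            show -(a:EReal) = ((-a:ℝ):EReal) from by rw [EReal.coe_neg],
            show (⊤:EReal) + ((-a:ℝ):EReal) = ⊤ from EReal.top_add_coe _,
            show (⊥:EReal) + (a:EReal) = ⊥ from EReal.bot_add _,
            show (⊥:EReal) + ((-a:ℝ):EReal) = ⊥ from EReal.bot_add _,
            tanhHalf_top, tanhHalf_bot]
          rw [show |(1:ℝ)| = 1 from abs_one, gK_s_one φ (by rwa [abs_abs])]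
          norm_num
          ring
  | coe b =>
      induction α using EReal.rec with
      | bot => exact absurd rfl hα
      | top =>
          rw [tanhHalf_top, tanhHalf_coe]
          have ht : |tanh (b/2)| < 1 := abs_tanh_lt_one _
          rw [show -(⊤:EReal) = ⊥ from rfl,
            show (b:EReal) + (⊤:EReal) = ⊤ from EReal.coe_add_top b,
            show (b:EReal) + (⊥:EReal) = ⊥ from EReal.add_bot _,
            show -(b:EReal) = ((-b:ℝ):EReal) from by rw [EReal.coe_neg],
            show ((-b:ℝ):EReal) + (⊤:EReal) = ⊤ from EReal.coe_add_top _,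
            show ((-b:ℝ):EReal) + (⊥:EReal) = ⊥ from EReal.add_bot _,
            tanhHalf_top, tanhHalf_bot]
          rw [show |(1:ℝ)| = 1 from abs_one, gK_one_t φ (by rw [abs_abs]; exact ht.le)]
          rw [show |(-1:ℝ)| = 1 from by norm_num]
          ring
      | coe a =>
          rw [tanhHalf_coe, tanhHalf_coe]
          rw [show -(a:EReal) = ((-a:ℝ):EReal) from by rw [EReal.coe_neg],
            show -(b:EReal) = ((-b:ℝ):EReal) from by rw [EReal.coe_neg],
            show (b:EReal) + (a:EReal) = ((b+a:ℝ):EReal) from by rw [EReal.coe_add],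
            show (b:EReal) + ((-a:ℝ):EReal) = ((b + -a:ℝ):EReal) from by rw [EReal.coe_add],
            show ((-b:ℝ):EReal) + (a:EReal) = ((-b + a:ℝ):EReal) from by rw [EReal.coe_add],
            show ((-b:ℝ):EReal) + ((-a:ℝ):EReal) = ((-b + -a:ℝ):EReal) from by rw [EReal.coe_add]]
          rw [tanhHalf_coe, tanhHalf_coe, tanhHalf_coe, tanhHalf_coe]
          exact kernel_real φ b a

end KernelAux

section FinalAux
open Real Set MeasureTheory

lemma wsum_bound {u v x y B : ℝ} (hu : 0 ≤ u) (hv : 0 ≤ v) (huv : u + v = 1)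
    (hx : |x| ≤ B) (hy : |y| ≤ B) : |u*x + v*y| ≤ B := by
  calc |u*x + v*y| ≤ |u*x| + |v*y| := abs_add_le _ _
    _ = u*|x| + v*|y| := by rw [abs_mul, abs_mul, abs_of_nonneg hu, abs_of_nonneg hv]
    _ ≤ u*B + v*B := by gcongr
    _ = B := by rw [← add_mul, huv, one_mul]

lemma weight_pos_mem (γ : EReal) :
    0 ≤ (1 + tanhHalf γ)/2 ∧ 0 ≤ (1 - tanhHalf γ)/2 ∧
      (1 + tanhHalf γ)/2 + (1 - tanhHalf γ)/2 = 1 := by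
  have := tanhHalf_mem γ
  refine ⟨by linarith [this.1], by linarith [this.2], by ring⟩

lemma hat1_bound {F : EReal → ℝ} {B : ℝ} (hFb : ∀ γ, |F γ| ≤ B) (β α : EReal) :
    |hat1 F β α| ≤ B := by
  obtain ⟨h1, h2, h3⟩ := weight_pos_mem α
  exact wsum_bound h1 h2 h3 (hFb _) (hFb _)

lemma hat2_bound {F : EReal → ℝ} {B : ℝ} (hFb : ∀ γ, |F γ| ≤ B) (β α : EReal) :
    |hat2 F β α| ≤ B := by
  obtain ⟨h1, h2, h3⟩ := weight_pos_mem β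
  exact wsum_bound h1 h2 h3 (hat1_bound hFb _ _) (hat1_bound hFb _ _)

lemma hat1_meas {F : EReal → ℝ} (hFm : Measurable F) :
    Measurable (fun p : EReal × EReal => hat1 F p.1 p.2) := by
  unfold hat1
  apply Measurable.add
  · exact (((measurable_const.add (measurable_tanhHalf.comp measurable_snd)).div_const 2).mul
      (hFm.comp measurable_ereal_add))
  · exact (((measurable_const.sub (measurable_tanhHalf.comp measurable_snd)).div_const 2).mul
      (hFm.comp (measurable_ereal_add.comp (measurable_fst.prodMk
        (measurable_ereal_neg.comp measurable_snd)))))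

lemma hat2_meas {F : EReal → ℝ} (hFm : Measurable F) :
    Measurable (fun p : EReal × EReal => hat2 F p.1 p.2) := by
  unfold hat2
  apply Measurable.add
  · exact (((measurable_const.add (measurable_tanhHalf.comp measurable_fst)).div_const 2).mul
      ((hat1_meas hFm).comp (measurable_fst.prodMk measurable_snd)))
  · exact (((measurable_const.sub (measurable_tanhHalf.comp measurable_fst)).div_const 2).mul
      ((hat1_meas hFm).comp ((measurable_ereal_neg.comp measurable_fst).prodMk measurable_snd)))

lemma ae_ne_bot {μ : Measure EReal} (hsym : IsSymmMeasure μ) : ∀ᵐ α ∂μ, α ≠ ⊥ := by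
  rw [MeasureTheory.ae_iff]
  have : {a : EReal | ¬ a ≠ ⊥} = {⊥} := by ext a; simp [not_not]
  rw [this]
  exact symm_bot_null hsym

lemma scale_concave {φ : ℝ → ℝ} (hφc : ConcaveOn ℝ (Icc (0:ℝ) 1) φ) {s : ℝ}
    (hs : s ∈ Icc (0:ℝ) 1) : ConcaveOn ℝ (Icc (0:ℝ) 1) (fun u => φ (u * s)) := by
  refine ⟨convex_Icc _ _, fun x hx y hy p q hp hq hpq => ?_⟩
  have hxs : x*s ∈ Icc (0:ℝ) 1 :=
    ⟨mul_nonneg hx.1 hs.1, by nlinarith [hx.1, hx.2, hs.1, hs.2]⟩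
  have hys : y*s ∈ Icc (0:ℝ) 1 :=
    ⟨mul_nonneg hy.1 hs.1, by nlinarith [hy.1, hy.2, hs.1, hs.2]⟩
  have key := hφc.2 hxs hys hp hq hpq
  have e : (p • x + q • y) * s = p • (x*s) + q • (y*s) := by
    simp only [smul_eq_mul]; ring
  simp only
  rw [e]
  exact key

lemma scale_anti {φ : ℝ → ℝ} (hφa : Antitone φ) {s : ℝ} (hs : 0 ≤ s) :
    AntitoneOn (fun u => φ (u * s)) (Icc (0:ℝ) 1) :=
  fun x _ y _ hxy => hφa (mul_le_mul_of_nonneg_right hxy hs)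

end FinalAux






open Real Set MeasureTheory in
/-- Degradation is preserved by both operations: if `x1 ⪰ x2`, then
for every `x3 ∈ X`, `x1 ⊛ x3 ⪰ x2 ⊛ x3` and `x1 ⊠ x3 ⪰ x2 ⊠ x3`. -/
theorem degradation_preserved
    (x1 x2 : SM) (h1 : MemX x1) (h2 : MemX x2) (hdeg : Degraded x1 x2) :
    ∀ x3 : SM, MemX x3 →
      Degraded (sConv x1 x3) (sConv x2 x3) ∧ Degraded (sCheck x1 x3) (sCheck x2 x3) := by
  intro x3 h3
  obtain ⟨μ1, hp1, hsym1, hjp1, hjn1⟩ := memX_repr h1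
  obtain ⟨μ2, hp2, hsym2, hjp2, hjn2⟩ := memX_repr h2
  obtain ⟨μ3, hp3, hsym3, hjp3, hjn3⟩ := memX_repr h3
  haveI := hp1; haveI := hp2; haveI := hp3
  constructor
  · -- variable node
    intro f hconc hanti
    set φ : ℝ → ℝ := fun r => f (clamp r) with hφdef
    set B : ℝ := max |f 0| |f 1| with hBdef
    have hφb : ∀ r, |φ r| ≤ B := fun r => phi_bound hanti r
    have hφm : Measurable φ := (phi_anti hanti).measurable
    have hφconc : ConcaveOn ℝ (Icc (0:ℝ) 1) φ := phi_concOn hconc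
    have hφanti : AntitoneOn φ (Icc (0:ℝ) 1) := (phi_anti hanti).antitoneOn _
    set F : EReal → ℝ := fun γ => φ |tanhHalf γ| with hFdef
    have hFm : Measurable F := hφm.comp measurable_tanhHalf.abs
    have hFb : ∀ γ, |F γ| ≤ B := fun γ => hφb _
    have hfφ : ∀ γ : EReal, f |tanhHalf γ| = F γ :=
      fun γ => (phi_eq (abs_tanhHalf_mem γ)).symm
    -- the master computation
    have key : ∀ (x : SM) (μ : Measure EReal) (inst : IsProbabilityMeasure μ),
        IsSymmMeasure μ → jp x = μ → jn x = 0 →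
        If f (sConv x x3) = ∫ α, (∫ β, hat2 F β α ∂μ) ∂μ3 := by
      intro x μ inst hsym hjp hjn
      haveI := inst
      have hFaddInt : Integrable (fun p : EReal × EReal => F (p.1 + p.2)) (μ.prod μ3) :=
        integrable_of_bdd ((hFm.comp measurable_ereal_add).aestronglyMeasurable)
          (fun p => hFb _)
      have hH1int : Integrable (Function.uncurry (fun β α => hat1 F β α)) (μ.prod μ3) :=
        integrable_of_bdd ((hat1_meas hFm).aestronglyMeasurable)
          (fun p => hat1_bound hFb _ _)
      rw [sConv_eq hjp hjn hjp3 hjn3, If_eq (jp_of_measure _) (jn_of_measure _) f]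
      calc ∫ γ, f |tanhHalf γ| ∂(mConv μ μ3)
          = ∫ γ, F γ ∂(mConv μ μ3) := integral_congr_ae (ae_of_all _ hfφ)
        _ = ∫ p, F (p.1 + p.2) ∂(μ.prod μ3) := by
            unfold mConv
            exact integral_map measurable_ereal_add.aemeasurable hFm.aestronglyMeasurable
        _ = ∫ β, ∫ α, F (β + α) ∂μ3 ∂μ := integral_prod _ hFaddInt
        _ = ∫ β, ∫ α, hat1 F β α ∂μ3 ∂μ := by
            apply integral_congr_ae (ae_of_all _ _)
            intro β
            exact symm_integral hsym3
              (hFm.comp (measurable_ereal_add.comp (measurable_const.prodMk measurable_id)))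
              (fun α => hFb _)
        _ = ∫ α, ∫ β, hat1 F β α ∂μ ∂μ3 := integral_integral_swap hH1int
        _ = ∫ α, ∫ β, hat2 F β α ∂μ ∂μ3 := by
            apply integral_congr_ae (ae_of_all _ _)
            intro α
            exact symm_integral hsym
              ((hat1_meas hFm).comp (measurable_id.prodMk measurable_const))
              (fun β => hat1_bound hFb _ _)
    have hH2int : ∀ (μ : Measure EReal), IsProbabilityMeasure μ →
        Integrable (fun p : EReal × EReal => hat2 F p.1 p.2) (μ.prod μ3) := by
      intro μ inst
      haveI := inst
      exact integrable_of_bdd ((hat2_meas hFm).aestronglyMeasurable)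
        (fun p => hat2_bound hFb _ _)
    have innerInt : ∀ (μ : Measure EReal) (inst : IsProbabilityMeasure μ),
        Integrable (fun α => ∫ β, hat2 F β α ∂μ) μ3 := by
      intro μ inst
      haveI := inst
      exact (hH2int μ inst).integral_prod_right
    -- pointwise comparison via hdeg
    have hae : ∀ᵐ α ∂μ3, (∫ β, hat2 F β α ∂μ2) ≤ ∫ β, hat2 F β α ∂μ1 := by
      filter_upwards [ae_ne_bot hsym3] with α hα
      have hsmem : |tanhHalf α| ∈ Icc (0:ℝ) 1 := abs_tanhHalf_mem α
      have e : ∀ (x : SM) (μ : Measure EReal) (inst : IsProbabilityMeasure μ),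
          IsSymmMeasure μ → jp x = μ → jn x = 0 →
          ∫ β, hat2 F β α ∂μ = If (gK φ |tanhHalf α|) x := by
        intro x μ inst hsym hjp hjn
        haveI := inst
        rw [If_eq hjp hjn]
        apply integral_congr_ae
        filter_upwards [ae_ne_bot hsym] with β hβ
        exact hat2_eq φ (fun γ => rfl) hβ hα
      rw [e x1 μ1 hp1 hsym1 hjp1 hjn1, e x2 μ2 hp2 hsym2 hjp2 hjn2]
      exact hdeg (gK φ |tanhHalf α|) (gK_concave01 hφconc hφanti hsmem)
        (gK_anti hφconc hφanti hsmem)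
    rw [key x1 μ1 hp1 hsym1 hjp1 hjn1, key x2 μ2 hp2 hsym2 hjp2 hjn2]
    exact integral_mono_ae (innerInt μ2 hp2) (innerInt μ1 hp1) hae
  · -- check node
    intro f hconc hanti
    set φ : ℝ → ℝ := fun r => f (clamp r) with hφdef
    set B : ℝ := max |f 0| |f 1| with hBdef
    have hφb : ∀ r, |φ r| ≤ B := fun r => phi_bound hanti r
    have hφm : Measurable φ := (phi_anti hanti).measurable
    have hφconc : ConcaveOn ℝ (Icc (0:ℝ) 1) φ := phi_concOn hconc
    have hφa : Antitone φ := phi_anti hanti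
    set F : EReal → ℝ := fun γ => φ |tanhHalf γ| with hFdef
    have hFm : Measurable F := hφm.comp measurable_tanhHalf.abs
    have hFb : ∀ γ, |F γ| ≤ B := fun γ => hφb _
    have hfφ : ∀ γ : EReal, f |tanhHalf γ| = F γ :=
      fun γ => (phi_eq (abs_tanhHalf_mem γ)).symm
    have hmulmeas : Measurable (fun p : EReal × EReal => φ (|tanhHalf p.1| * |tanhHalf p.2|)) :=
      hφm.comp (((measurable_tanhHalf.comp measurable_fst).abs).mul
        ((measurable_tanhHalf.comp measurable_snd).abs))
    have key : ∀ (x : SM) (μ : Measure EReal) (inst : IsProbabilityMeasure μ),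
        jp x = μ → jn x = 0 →
        If f (sCheck x x3) = ∫ α, (∫ β, φ (|tanhHalf β| * |tanhHalf α|) ∂μ) ∂μ3 := by
      intro x μ inst hjp hjn
      haveI := inst
      have hmulInt : Integrable (fun p : EReal × EReal =>
          φ (|tanhHalf p.1| * |tanhHalf p.2|)) (μ.prod μ3) :=
        integrable_of_bdd (hmulmeas.aestronglyMeasurable) (fun p => hφb _)
      rw [sCheck_eq hjp hjn hjp3 hjn3, If_eq (jp_of_measure _) (jn_of_measure _) f]
      calc ∫ γ, f |tanhHalf γ| ∂(mCheck μ μ3)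
          = ∫ γ, F γ ∂(mCheck μ μ3) := integral_congr_ae (ae_of_all _ hfφ)
        _ = ∫ p, F (atanhTwo (tanhHalf p.1 * tanhHalf p.2)) ∂(μ.prod μ3) := by
            unfold mCheck
            exact integral_map measurable_checkfn.aemeasurable hFm.aestronglyMeasurable
        _ = ∫ p : EReal × EReal, φ (|tanhHalf p.1| * |tanhHalf p.2|) ∂(μ.prod μ3) := by
            apply integral_congr_ae (ae_of_all _ _)
            intro p
            have habs : |tanhHalf p.1 * tanhHalf p.2| ≤ 1 := by
              rw [abs_mul]
              exact mul_le_one₀ (abs_tanhHalf_le _) (abs_nonneg _) (abs_tanhHalf_le _)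
            show F (atanhTwo (tanhHalf p.1 * tanhHalf p.2)) = _
            rw [hFdef]
            simp only
            rw [tanhHalf_atanhTwo habs, abs_mul]
        _ = ∫ α, ∫ β, φ (|tanhHalf β| * |tanhHalf α|) ∂μ ∂μ3 :=
            integral_prod_symm _ hmulInt
    have innerInt : ∀ (μ : Measure EReal) (inst : IsProbabilityMeasure μ),
        Integrable (fun α => ∫ β, φ (|tanhHalf β| * |tanhHalf α|) ∂μ) μ3 := by
      intro μ inst
      haveI := inst
      exact (integrable_of_bdd (μ := μ.prod μ3) (hmulmeas.aestronglyMeasurable)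
        (fun p => hφb _)).integral_prod_right
    have hae : ∀ α, (∫ β, φ (|tanhHalf β| * |tanhHalf α|) ∂μ2)
        ≤ ∫ β, φ (|tanhHalf β| * |tanhHalf α|) ∂μ1 := by
      intro α
      have hsmem : |tanhHalf α| ∈ Icc (0:ℝ) 1 := abs_tanhHalf_mem α
      have e : ∀ (x : SM) (μ : Measure EReal) (inst : IsProbabilityMeasure μ),
          jp x = μ → jn x = 0 →
          ∫ β, φ (|tanhHalf β| * |tanhHalf α|) ∂μ
            = If (fun u => φ (u * |tanhHalf α|)) x := by
        intro x μ inst hjp hjn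
        haveI := inst
        rw [If_eq hjp hjn]
      rw [e x1 μ1 hp1 hjp1 hjn1, e x2 μ2 hp2 hjp2 hjn2]
      exact hdeg (fun u => φ (u * |tanhHalf α|)) (scale_concave hφconc hsmem)
        (scale_anti hφa hsmem.1)
    rw [key x1 μ1 hp1 hjp1 hjn1, key x2 μ2 hp2 hjp2 hjn2]
    exact integral_mono_ae (innerInt μ2 hp2) (innerInt μ1 hp1) (ae_of_all _ hae)


end SCLDPC
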